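/- For every real n×d matrix Z, every vector y ∈ ℝⁿ, and every real σ > 0, one has yᵀ (Z Zᵀ + σ² Iₙ)⁻¹ y + log det(Z Zᵀ + σ² Iₙ) = (min over w ∈ ℝᵈ of (1/σ²)‖Z w − y‖² + ‖w‖²) + log det(Zᵀ Z + σ² I_d) + (n − d) · log(σ²), where the minimum is attained. -/

import Mathlib

open Matrix

/-- For every real `n × d` matrix `Z`, every `y ∈ ℝⁿ`, and every real `σ > 0`:
`yᵀ (Z Zᵀ + σ² Iₙ)⁻¹ y + log det(Z Zᵀ + σ² Iₙ)
  = (min_w (1/σ²)‖Z w − y‖² + ‖w‖²) + log det(Zᵀ Z + σ² I_d) + (n − d) log σ²`,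
where the minimum is attained. -/
theorem log_marginal_likelihood_reformulation (n d : ℕ)
    (Z : Matrix (Fin n) (Fin d) ℝ) (y : Fin n → ℝ) (σ : ℝ) (hσ : 0 < σ) :
    ∃ m : ℝ,
      IsLeast
        {r : ℝ | ∃ w : Fin d → ℝ,
          r = (1 / σ ^ 2) * ((Z *ᵥ w - y) ⬝ᵥ (Z *ᵥ w - y)) + w ⬝ᵥ w} m ∧
      y ⬝ᵥ (Z * Zᵀ + σ ^ 2 • (1 : Matrix (Fin n) (Fin n) ℝ))⁻¹ *ᵥ y +
          Real.log (Z * Zᵀ + σ ^ 2 • (1 : Matrix (Fin n) (Fin n) ℝ)).det =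
        m + Real.log (Zᵀ * Z + σ ^ 2 • (1 : Matrix (Fin d) (Fin d) ℝ)).det +
          ((n : ℝ) - (d : ℝ)) * Real.log (σ ^ 2) := by
  have hs : (0:ℝ) < σ ^ 2 := by positivity
  set A : Matrix (Fin d) (Fin d) ℝ := Zᵀ * Z + σ ^ 2 • (1 : Matrix (Fin d) (Fin d) ℝ) with hAdef
  set B : Matrix (Fin n) (Fin n) ℝ := Z * Zᵀ + σ ^ 2 • (1 : Matrix (Fin n) (Fin n) ℝ) with hBdef
  -- positive definiteness
  have hsmul1 : ∀ k : ℕ, (σ ^ 2 • (1 : Matrix (Fin k) (Fin k) ℝ)).PosDef := by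
    intro k
    rw [smul_one_eq_diagonal]
    exact Matrix.PosDef.diagonal fun _ => hs
  have hZtZ : (Zᵀ * Z).PosSemidef := by
    simpa using Matrix.posSemidef_conjTranspose_mul_self Z
  have hZZt : (Z * Zᵀ).PosSemidef := by
    simpa using Matrix.posSemidef_self_mul_conjTranspose Z
  have hA : A.PosDef := Matrix.PosDef.posSemidef_add hZtZ (hsmul1 d)
  have hB : B.PosDef := Matrix.PosDef.posSemidef_add hZZt (hsmul1 n)
  have hAdet : IsUnit A.det := isUnit_iff_ne_zero.mpr hA.det_pos.ne'
  have hAinv : A * A⁻¹ = 1 := Matrix.mul_nonsing_inv _ hAdet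
  -- B⁻¹ in terms of A⁻¹
  have hBZ : B * Z = Z * A := by
    rw [hAdef, hBdef, Matrix.add_mul, Matrix.mul_add, Matrix.smul_mul, Matrix.one_mul,
      Matrix.mul_smul, Matrix.mul_one, Matrix.mul_assoc]
  have hBinv : B⁻¹ = (1 / σ ^ 2) • (1 - Z * A⁻¹ * Zᵀ) := by
    apply Matrix.inv_eq_right_inv
    have h1 : B * (1 - Z * A⁻¹ * Zᵀ) = σ ^ 2 • 1 := by
      rw [Matrix.mul_sub, Matrix.mul_one, ← Matrix.mul_assoc, ← Matrix.mul_assoc, hBZ,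
        Matrix.mul_assoc Z A A⁻¹, hAinv, Matrix.mul_one, hBdef]
      abel
    rw [Matrix.mul_smul, h1, smul_smul]
    rw [one_div, inv_mul_cancel₀ hs.ne', one_smul]
  -- the minimizer
  set w₀ : Fin d → ℝ := A⁻¹ *ᵥ (Zᵀ *ᵥ y) with hw₀
  have hAw₀ : A *ᵥ w₀ = Zᵀ *ᵥ y := by
    rw [hw₀, Matrix.mulVec_mulVec, hAinv, Matrix.one_mulVec]
  set m : ℝ := y ⬝ᵥ B⁻¹ *ᵥ y with hm
  -- value of m
  have hmval : m = (1 / σ ^ 2) * (y ⬝ᵥ y - (Zᵀ *ᵥ y) ⬝ᵥ w₀) := by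
    rw [hm, hBinv, Matrix.smul_mulVec, dotProduct_smul, smul_eq_mul, Matrix.sub_mulVec,
      Matrix.one_mulVec, dotProduct_sub]
    congr 2
    rw [Matrix.mul_assoc, ← Matrix.mulVec_mulVec, ← Matrix.mulVec_mulVec, ← hw₀,
      Matrix.dotProduct_mulVec, ← Matrix.mulVec_transpose]
  -- symmetry of A
  have hAsymm : Aᵀ = A := by
    have := hA.isHermitian
    exact (by simpa using this : A.IsSymm)
  -- key identity
  have key : ∀ w : Fin d → ℝ,
      (1 / σ ^ 2) * ((Z *ᵥ w - y) ⬝ᵥ (Z *ᵥ w - y)) + w ⬝ᵥ w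
        = m + (1 / σ ^ 2) * ((w - w₀) ⬝ᵥ A *ᵥ (w - w₀)) := by
    intro w
    have hcross : ∀ v : Fin d → ℝ, y ⬝ᵥ (Z *ᵥ v) = (Zᵀ *ᵥ y) ⬝ᵥ v := by
      intro v
      rw [Matrix.dotProduct_mulVec, ← Matrix.mulVec_transpose]
    have e1 : (Z *ᵥ w - y) ⬝ᵥ (Z *ᵥ w - y)
        = (Z *ᵥ w) ⬝ᵥ (Z *ᵥ w) - 2 * ((Zᵀ *ᵥ y) ⬝ᵥ w) + y ⬝ᵥ y := by
      rw [sub_dotProduct, dotProduct_sub, dotProduct_sub, ← hcross w,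
        dotProduct_comm (Z *ᵥ w) y]
      ring
    have hsymdot : ∀ u v : Fin d → ℝ, u ⬝ᵥ A *ᵥ v = (A *ᵥ u) ⬝ᵥ v := by
      intro u v
      rw [Matrix.dotProduct_mulVec, ← Matrix.mulVec_transpose, hAsymm]
    have e3 : w ⬝ᵥ A *ᵥ w = (Z *ᵥ w) ⬝ᵥ (Z *ᵥ w) + σ ^ 2 * (w ⬝ᵥ w) := by
      rw [hAdef, Matrix.add_mulVec, dotProduct_add, Matrix.smul_mulVec,
        Matrix.one_mulVec, dotProduct_smul, smul_eq_mul, ← Matrix.mulVec_mulVec,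
        Matrix.dotProduct_mulVec, ← Matrix.mulVec_transpose, transpose_transpose]
    have e2 : (w - w₀) ⬝ᵥ A *ᵥ (w - w₀)
        = w ⬝ᵥ A *ᵥ w - 2 * ((Zᵀ *ᵥ y) ⬝ᵥ w) + (Zᵀ *ᵥ y) ⬝ᵥ w₀ := by
      rw [Matrix.mulVec_sub, sub_dotProduct, dotProduct_sub, dotProduct_sub]
      have h1 : w ⬝ᵥ A *ᵥ w₀ = (Zᵀ *ᵥ y) ⬝ᵥ w := by
        rw [hAw₀, dotProduct_comm]
      have h2 : w₀ ⬝ᵥ A *ᵥ w = (Zᵀ *ᵥ y) ⬝ᵥ w := by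
        rw [hsymdot, hAw₀]
      have h3 : w₀ ⬝ᵥ A *ᵥ w₀ = (Zᵀ *ᵥ y) ⬝ᵥ w₀ := by
        rw [hsymdot, hAw₀]
      rw [h1, h2, h3]; ring
    rw [e1, e2, e3, hmval]
    field_simp
    ring
  refine ⟨m, ⟨⟨w₀, ?_⟩, ?_⟩, ?_⟩
  · rw [key w₀]
    simp
  · rintro r ⟨w, rfl⟩
    rw [key w]
    have hq : 0 ≤ (w - w₀) ⬝ᵥ A *ᵥ (w - w₀) := by
      have := hA.posSemidef.dotProduct_mulVec_nonneg (w - w₀)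
      simpa using this
    have h0 : 0 ≤ (1 / σ ^ 2) * ((w - w₀) ⬝ᵥ A *ᵥ (w - w₀)) :=
      mul_nonneg (by positivity) hq
    linarith
  -- determinant identity
  · have hBform : B = σ ^ 2 • (1 + ((σ ^ 2)⁻¹ • Z) * Zᵀ) := by
      rw [Matrix.smul_mul, smul_add, smul_smul, mul_inv_cancel₀ hs.ne', one_smul, hBdef, add_comm]
    have hAform : A = σ ^ 2 • (1 + Zᵀ * ((σ ^ 2)⁻¹ • Z)) := by
      rw [Matrix.mul_smul, smul_add, smul_smul, mul_inv_cancel₀ hs.ne', one_smul, hAdef, add_comm]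
    have hdet : B.det * (σ ^ 2) ^ d = A.det * (σ ^ 2) ^ n := by
      rw [hBform, hAform, Matrix.det_smul, Matrix.det_smul,
        Matrix.det_one_add_mul_comm]
      simp [Fintype.card_fin]
      ring
    have hlog := congrArg Real.log hdet
    rw [Real.log_mul hB.det_pos.ne' (pow_ne_zero _ hs.ne'),
      Real.log_mul hA.det_pos.ne' (pow_ne_zero _ hs.ne')] at hlog
    simp only [Real.log_pow] at hlog
    have h2 : Real.log (σ ^ 2) = 2 * Real.log σ := by
      rw [Real.log_pow]; norm_num
    have : Real.log B.det = Real.log A.det + ((n : ℝ) - (d : ℝ)) * Real.log (σ ^ 2) := by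
      rw [h2]; push_cast at hlog; linear_combination hlog
    rw [this]; ring
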